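/- arXiv:1303.6981 — 2 statements merged into one kernel-verified Lean document; each statement's English description precedes it below -/
import Mathlib

section
/- Let Ω = {0,1}^ℕ, A_i = {ω : ω_i = 1}, 𝒞 = {A_i : i ≥ 1}, and P(A_i) = 1/2 − 4^{-i}. Then P is coherent in betting system 3 on 𝒞, yet no extension of P to the field generated by 𝒞 is coherent in betting system 3. -/
open Filter MeasureTheory ENNReal

variable {Ω : Type*}

noncomputable def ind (A : Set Ω) (ω : Ω) : ℝ := A.indicator (fun _ => (1:ℝ)) ω

def SeriesTendsTo (f : ℕ → ℝ) (x : ℝ) : Prop :=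
  Tendsto (fun n => ∑ i ∈ Finset.range n, f i) atTop (nhds x)

def SeriesConv (f : ℕ → ℝ) : Prop := ∃ x, SeriesTendsTo f x

noncomputable def bterm (P : Set Ω → ℝ) (α : ℕ → ℝ) (A : ℕ → Set Ω) (ω : Ω) (i : ℕ) : ℝ :=
  α i * (ind (A i) ω - P (A i))

def IsSetField (C : Set (Set Ω)) : Prop :=
  Set.univ ∈ C ∧ (∀ A ∈ C, Aᶜ ∈ C) ∧ ∀ A ∈ C, ∀ B ∈ C, A ∪ B ∈ C

def System1 (C : Set (Set Ω)) (α : ℕ → ℝ) (A : ℕ → Set Ω) : Prop :=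
  (∀ i, A i ∈ C) ∧ {i | α i ≠ 0}.Finite

def System2 (C : Set (Set Ω)) (P : Set Ω → ℝ) (α : ℕ → ℝ) (A : ℕ → Set Ω) : Prop :=
  (∀ i, A i ∈ C) ∧ Summable (fun i => |α i| * P (A i)) ∧
    ∀ ω, SeriesConv (bterm P α A ω)

def System2A (C : Set (Set Ω)) (P : Set Ω → ℝ) (α : ℕ → ℝ) (A : ℕ → Set Ω) : Prop :=
  (∀ i, A i ∈ C) ∧ ∀ ω, Summable (fun i => |bterm P α A ω i|)

def System2B (C : Set (Set Ω)) (P : Set Ω → ℝ) (α : ℕ → ℝ) (A : ℕ → Set Ω) : Prop :=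
  (∀ i, A i ∈ C) ∧ ∃ M : ℝ, ∀ ω, ∀ n, ∑ i ∈ Finset.range n, |bterm P α A ω i| ≤ M

def System3 (C : Set (Set Ω)) (P : Set Ω → ℝ) (α : ℕ → ℝ) (A : ℕ → Set Ω) : Prop :=
  (∀ i, A i ∈ C) ∧ SeriesConv (fun i => α i * P (A i)) ∧
    ∀ ω, SeriesConv (bterm P α A ω)

def IncoherentIn (P : Set Ω → ℝ) (S : (ℕ → ℝ) → (ℕ → Set Ω) → Prop) : Prop :=
  ∃ α A, S α A ∧ ∃ ε > (0:ℝ), ∀ ω, ∃ L, SeriesTendsTo (bterm P α A ω) L ∧ L ≤ -ε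

def CoherentIn (P : Set Ω → ℝ) (S : (ℕ → ℝ) → (ℕ → Set Ω) → Prop) : Prop :=
  ¬ IncoherentIn P S

def IsNullSet (C : Set (Set Ω)) (P : Set Ω → ℝ) (Z : Set Ω) : Prop :=
  ∀ δ : ℝ, 0 < δ → ∃ Zd ∈ C, Z ⊆ Zd ∧ P Zd < δ

def WeaklyIncoherentIn (C : Set (Set Ω)) (P : Set Ω → ℝ)
    (S : (ℕ → ℝ) → (ℕ → Set Ω) → Prop) : Prop :=
  ∃ α A, S α A ∧ ∃ ε > (0:ℝ), ∃ Z : Set Ω, IsNullSet C P Z ∧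
    ∀ ω ∉ Z, ∃ L, SeriesTendsTo (bterm P α A ω) L ∧ L ≤ -ε

def StronglyCoherentIn (C : Set (Set Ω)) (P : Set Ω → ℝ)
    (S : (ℕ → ℝ) → (ℕ → Set Ω) → Prop) : Prop :=
  ¬ WeaklyIncoherentIn C P S

def IrrationalIn (P : Set Ω → ℝ) (S : (ℕ → ℝ) → (ℕ → Set Ω) → Prop) : Prop :=
  ∃ α A, S α A ∧ ∀ ω, ∃ L, SeriesTendsTo (bterm P α A ω) L ∧ L < 0

def RationalIn (P : Set Ω → ℝ) (S : (ℕ → ℝ) → (ℕ → Set Ω) → Prop) : Prop :=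
  ¬ IrrationalIn P S

def IsCAProb (C : Set (Set Ω)) (P : Set Ω → ℝ) : Prop :=
  P Set.univ = 1 ∧ (∀ A ∈ C, 0 ≤ P A) ∧
  (∀ A ∈ C, ∀ B ∈ C, Disjoint A B → P (A ∪ B) = P A + P B) ∧
  (∀ A : ℕ → Set Ω, (∀ i, A i ∈ C) → Pairwise (Function.onFun Disjoint A) →
    (⋃ i, A i) ∈ C → HasSum (fun i => P (A i)) (P (⋃ i, A i)))

def IsPAtom (C : Set (Set Ω)) (P : Set Ω → ℝ) (F : Set Ω) : Prop :=
  F ∈ C ∧ 0 < P F ∧ ∀ B ∈ C, B ⊆ F → P B = P F ∨ P B = 0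

def FiniteAtomicPartition (C : Set (Set Ω)) (P : Set Ω → ℝ) : Prop :=
  ∃ (n : ℕ) (F : Fin n → Set Ω), (∀ j, IsPAtom C P (F j)) ∧
    Pairwise (Function.onFun Disjoint F) ∧ (⋃ j, F j) = Set.univ

def IsPFinite (C : Set (Set Ω)) (P : Set Ω → ℝ) : Prop :=
  ∀ B : ℕ → Set Ω, (∀ i, B i ∈ C) → (∀ i, B (i+1) ⊆ B i) →
    Tendsto (fun i => P (B i)) atTop (nhds 0) → ∃ j, P (B j) = 0

def AB (i : ℕ) : Set (ℕ → Bool) := {ω | ω i = true}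

-- block index function
def kf (i : ℕ) : ℕ := if i % 4 = 3 then i / 4 + 1 else 3 * (i / 4) + 1 + i % 4

lemma kf_pos (i : ℕ) : 1 ≤ kf i := by
  unfold kf; split <;> omega

open Finset in
lemma sum_range_four_mul (f : ℕ → ℝ) (M : ℕ) :
    ∑ i ∈ Finset.range (4*M), f i
      = ∑ n ∈ Finset.range M, (f (4*n) + f (4*n+1) + f (4*n+2) + f (4*n+3)) := by
  induction M with
  | zero => simp
  | succ M ih =>
    rw [show 4*(M+1) = ((((4*M)+1)+1)+1)+1 by ring, sum_range_succ, sum_range_succ,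
        sum_range_succ, sum_range_succ, ih, sum_range_succ]
    ring_nf

open Finset in
lemma dutch_of_family (D : Set (Set Ω)) (Q : Set Ω → ℝ)
    (T : ℕ → Set Ω) (hTD : ∀ k, T k ∈ D)
    (hdisj : ∀ k l, k ≠ l → ∀ x, x ∈ T k → x ∉ T l)
    (hT0 : ∀ k, Q (T k) ≠ 0) :
    IncoherentIn Q (System3 D Q) := by
  classical
  set m : ℕ → ℝ := fun k => Q (T (k - 1)) with hm
  set α : ℕ → ℝ := fun i => (if i % 4 = 3 then (-1:ℝ) else 1) * (1 / (kf i * m (kf i))) with hα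
  set A : ℕ → Set Ω := fun i => T (kf i - 1) with hA
  have hm0 : ∀ k, m k ≠ 0 := fun k => hT0 _
  -- fee formula
  have hfee : ∀ i, α i * Q (A i) = (if i % 4 = 3 then (-1:ℝ) else 1) * (1 / (kf i : ℝ)) := by
    intro i
    have hk : (0:ℝ) < (kf i : ℝ) := by exact_mod_cast kf_pos i
    have : Q (A i) = m (kf i) := rfl
    have hmne := hm0 (kf i)
    have hkne : ((kf i):ℝ) ≠ 0 := ne_of_gt hk
    rw [hα, this]
    split_ifs with hcase
    · field_simp
      rw [if_pos hcase]
    · field_simp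
      rw [if_neg hcase]
  -- grouped fee terms
  set g : ℕ → ℝ := fun n =>
    1 / ((3*n+1 : ℕ) : ℝ) + 1 / ((3*n+2 : ℕ) : ℝ) + 1 / ((3*n+3 : ℕ) : ℝ) - 1 / ((n+1 : ℕ) : ℝ)
    with hg
  have kf0 : ∀ n, kf (4*n) = 3*n+1 := by intro n; unfold kf; split <;> omega
  have kf1 : ∀ n, kf (4*n+1) = 3*n+2 := by intro n; unfold kf; split <;> omega
  have kf2 : ∀ n, kf (4*n+2) = 3*n+3 := by intro n; unfold kf; split <;> omega
  have kf3 : ∀ n, kf (4*n+3) = n+1 := by intro n; unfold kf; split <;> omega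
  have fee0 : ∀ n, α (4*n) * Q (A (4*n)) = 1/((3*n+1 : ℕ) : ℝ) := by
    intro n; rw [hfee]; rw [if_neg (by omega), kf0]; ring
  have fee1 : ∀ n, α (4*n+1) * Q (A (4*n+1)) = 1/((3*n+2 : ℕ) : ℝ) := by
    intro n; rw [hfee]; rw [if_neg (by omega), kf1]; ring
  have fee2 : ∀ n, α (4*n+2) * Q (A (4*n+2)) = 1/((3*n+3 : ℕ) : ℝ) := by
    intro n; rw [hfee]; rw [if_neg (by omega), kf2]; ring
  have fee3 : ∀ n, α (4*n+3) * Q (A (4*n+3)) = -(1/((n+1 : ℕ) : ℝ)) := by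
    intro n; rw [hfee]; rw [if_pos (by omega), kf3]; ring
  -- bounds on g
  have hgpos : ∀ n, 0 ≤ g n ∧ g n ≤ 3 / (((n:ℝ)+1)*((n:ℝ)+1)) := by
    intro n
    have hn0 : (0:ℝ) ≤ (n:ℝ) := Nat.cast_nonneg n
    have hgeq : g n = 2/((3*(n:ℝ)+1)*(3*(n:ℝ)+3)) + 1/((3*(n:ℝ)+2)*(3*(n:ℝ)+3)) := by
      rw [hg]; push_cast; field_simp; ring
    constructor
    · rw [hgeq]; positivity
    · rw [hgeq]
      have e1 : 2/((3*(n:ℝ)+1)*(3*(n:ℝ)+3)) ≤ 2/(((n:ℝ)+1)*((n:ℝ)+1)) := by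
        apply div_le_div_of_nonneg_left (by norm_num) (by positivity)
        nlinarith
      have e2 : 1/((3*(n:ℝ)+2)*(3*(n:ℝ)+3)) ≤ 1/(((n:ℝ)+1)*((n:ℝ)+1)) := by
        apply div_le_div_of_nonneg_left (by norm_num) (by positivity)
        nlinarith
      have : 2/(((n:ℝ)+1)*((n:ℝ)+1)) + 1/(((n:ℝ)+1)*((n:ℝ)+1)) = 3/(((n:ℝ)+1)*((n:ℝ)+1)) := by
        ring
      linarith
  have hmaj : Summable (fun n : ℕ => 3 / (((n:ℝ)+1)*((n:ℝ)+1))) := by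
    have h0 : Summable (fun n : ℕ => 1/(n:ℝ)^2) := Real.summable_one_div_nat_pow.mpr one_lt_two
    have h1 : Summable (fun n : ℕ => 1/((n:ℝ)+1)^2) := by
      have := (summable_nat_add_iff 1).mpr h0
      apply this.congr
      intro n; push_cast; ring
    have h2 := h1.mul_left 3
    apply h2.congr
    intro n; rw [pow_two]; ring
  have hgsum : Summable g :=
    Summable.of_nonneg_of_le (fun n => (hgpos n).1) (fun n => (hgpos n).2) hmaj
  set x : ℝ := ∑' n, g n with hx
  have hxge : 5/6 ≤ x := by
    have h0 := hgsum.le_tsum 0 (fun j _ => (hgpos j).1)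
    have : g 0 = 5/6 := by rw [hg]; norm_num
    rw [← hx] at h0
    exact le_trans (le_of_eq this.symm) h0
  have hS : Tendsto (fun M => ∑ n ∈ range M, g n) atTop (nhds x) :=
    hgsum.hasSum.tendsto_sum_nat
  have hdiv4 : Tendsto (fun n : ℕ => n / 4) atTop atTop :=
    tendsto_atTop_atTop.mpr fun b => ⟨4*b, fun n hn => by omega⟩
  set FeeP : ℕ → ℝ := fun n => ∑ i ∈ range n, α i * Q (A i) with hFeeP
  have hgroup : ∀ M, FeeP (4*M) = ∑ n ∈ range M, g n := by
    intro M
    show (∑ i ∈ range (4*M), α i * Q (A i)) = _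
    rw [sum_range_four_mul (fun i => α i * Q (A i)) M]
    apply sum_congr rfl
    intro n _
    rw [fee0, fee1, fee2, fee3, hg]
    ring
  have kf_ge : ∀ i, i/4 + 1 ≤ kf i := by intro i; unfold kf; split <;> omega
  set E : ℕ → ℝ := fun n => ∑ i ∈ Ico (4*(n/4)) n, (α i * Q (A i)) with hE
  have hEbound : ∀ n, |E n| ≤ 3 * (1 / ((n/4 : ℕ) + 1 : ℝ)) := by
    intro n
    have h1 : ∀ i ∈ Ico (4*(n/4)) n, |α i * Q (A i)| ≤ 1 / ((n/4 : ℕ) + 1 : ℝ) := by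
      intro i hi
      simp only [mem_Ico] at hi
      rw [hfee i]
      have hki : (n/4 : ℕ) + 1 ≤ kf i := by
        have := kf_ge i
        omega
      have hkpos : (0:ℝ) < ((n/4 : ℕ) + 1 : ℝ) := by positivity
      have hcast : ((n/4 : ℕ) + 1 : ℝ) ≤ (kf i : ℝ) := by exact_mod_cast hki
      have habs : |(if i % 4 = 3 then (-1:ℝ) else 1) * (1 / (kf i : ℝ))| = 1 / (kf i : ℝ) := by
        split_ifs <;> simp [abs_of_nonneg, le_of_lt, one_div]
        all_goals positivity
      rw [habs]
      exact one_div_le_one_div_of_le hkpos hcast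
    calc |E n| ≤ ∑ i ∈ Ico (4*(n/4)) n, |α i * Q (A i)| := abs_sum_le_sum_abs _ _
      _ ≤ (Ico (4*(n/4)) n).card • (1 / ((n/4 : ℕ) + 1 : ℝ)) := sum_le_card_nsmul _ _ _ h1
      _ ≤ 3 * (1 / ((n/4 : ℕ) + 1 : ℝ)) := by
          rw [nsmul_eq_mul, Nat.card_Ico]
          have : (n - 4*(n/4) : ℕ) ≤ 3 := by omega
          have h3 : ((n - 4*(n/4) : ℕ) : ℝ) ≤ 3 := by exact_mod_cast this
          have hpos : (0:ℝ) ≤ 1 / ((n/4 : ℕ) + 1 : ℝ) := by positivity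
          exact mul_le_mul_of_nonneg_right h3 hpos
  have hrecip : Tendsto (fun q : ℕ => 3 * (1 / ((q:ℝ) + 1))) atTop (nhds 0) := by
    have h1 : Tendsto (fun q : ℕ => ((q:ℝ) + 1)) atTop atTop :=
      tendsto_atTop_add_const_right _ 1 tendsto_natCast_atTop_atTop
    have h2 : Tendsto (fun q : ℕ => 3 / ((q:ℝ) + 1)) atTop (nhds 0) :=
      Tendsto.div_atTop tendsto_const_nhds h1
    apply h2.congr
    intro q; ring
  have hEzero : Tendsto E atTop (nhds 0) := by
    apply squeeze_zero_norm hEbound (hrecip.comp hdiv4)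
  have hFeeTendsto : Tendsto FeeP atTop (nhds x) := by
    have hsplit : ∀ n, FeeP n = (∑ j ∈ range (n/4), g j) + E n := by
      intro n
      rw [← hgroup (n/4), hFeeP, hE]
      exact (sum_range_add_sum_Ico _ (by omega)).symm
    have := (hS.comp hdiv4).add hEzero
    rw [add_zero] at this
    exact this.congr (fun n => (hsplit n).symm)
  -- per-ω analysis
  have key : ∀ ω, SeriesTendsTo (bterm Q α A ω) (-x) := by
    intro ω
    unfold SeriesTendsTo
    have hbt : ∀ n, ∑ i ∈ range n, bterm Q α A ω i
        = (∑ i ∈ range n, α i * ind (A i) ω) - FeeP n := by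
      intro n
      rw [hFeeP, ← sum_sub_distrib]
      apply sum_congr rfl
      intro i _
      simp only [bterm]; ring
    have hIndTendsto : Tendsto (fun n => ∑ i ∈ range n, α i * ind (A i) ω) atTop (nhds 0) := by
      by_cases hmem : ∃ K0, ω ∈ T K0
      · obtain ⟨K0, hK0⟩ := hmem
        have hind : ∀ i, ind (A i) ω = if kf i = K0 + 1 then 1 else 0 := by
          intro i
          by_cases h : kf i = K0 + 1
          · rw [if_pos h]
            have hkk : kf i - 1 = K0 := by omega
            show ind (T (kf i - 1)) ω = 1
            rw [hkk]
            unfold ind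
            rw [Set.indicator_of_mem hK0]
          · rw [if_neg h]
            have hne : K0 ≠ kf i - 1 := by have := kf_pos i; omega
            show ind (T (kf i - 1)) ω = 0
            unfold ind
            rw [Set.indicator_of_notMem (hdisj K0 (kf i - 1) hne ω hK0)]
        have hkiff : ∀ i, kf i = K0 + 1 ↔
            (i = 4*(K0/3) + K0 % 3 ∨ i = 4*K0+3) := by
          intro i; unfold kf; split <;> omega
        have hne2 : (4*(K0/3) + K0 % 3) ≠ 4*K0+3 := by omega
        have hIndval : ∀ n, 4*K0+3 < n → (∑ i ∈ range n, α i * ind (A i) ω) = 0 := by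
          intro n hn
          have hsub : ({4*(K0/3) + K0 % 3, 4*K0+3} : Finset ℕ) ⊆ range n := by
            intro t ht
            simp only [Finset.mem_insert, Finset.mem_singleton] at ht
            rcases ht with h | h <;> (rw [h]; apply mem_range.mpr; omega)
          rw [← sum_subset hsub]
          · rw [sum_pair hne2]
            have hk1 : kf (4*(K0/3) + K0 % 3) = K0 + 1 := by unfold kf; split <;> omega
            have hk2 : kf (4*K0+3) = K0 + 1 := by unfold kf; split <;> omega
            rw [hind, hind, hk1, hk2]
            simp only [eq_self_iff_true, if_true]
            simp only [hα]
            rw [if_neg (show ¬(4*(K0/3) + K0 % 3) % 4 = 3 by omega),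
                if_pos (show (4*K0+3) % 4 = 3 by omega), hk1, hk2]
            ring
          · intro i hi hnotin
            rw [hind i]
            by_cases h : kf i = K0 + 1
            · exfalso
              rcases (hkiff i).mp h with h' | h'
              · exact hnotin (by simp [h'])
              · exact hnotin (by simp [h'])
            · rw [if_neg h, mul_zero]
        have hev : (fun _ : ℕ => (0:ℝ)) =ᶠ[atTop] (fun n => ∑ i ∈ range n, α i * ind (A i) ω) :=
          eventually_atTop.mpr ⟨4*K0+4, fun n hn => (hIndval n (by omega)).symm⟩
        exact tendsto_const_nhds.congr' hev
      · push_neg at hmem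
        have : ∀ n, (∑ i ∈ range n, α i * ind (A i) ω) = 0 := by
          intro n
          apply sum_eq_zero
          intro i _
          show α i * ind (T (kf i - 1)) ω = 0
          unfold ind
          rw [Set.indicator_of_notMem (hmem _), mul_zero]
        simpa [this] using (tendsto_const_nhds : Tendsto (fun _ : ℕ => (0:ℝ)) atTop (nhds 0))
    have := hIndTendsto.sub hFeeTendsto
    rw [zero_sub] at this
    exact this.congr (fun n => (hbt n).symm)
  refine ⟨α, A, ⟨fun i => hTD _, ⟨x, hFeeTendsto⟩, fun ω => ⟨-x, key ω⟩⟩,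
    5/6, by norm_num, fun ω => ⟨-x, key ω, by linarith⟩⟩

lemma ind_nonneg (A : Set Ω) (ω : Ω) : 0 ≤ ind A ω := by
  unfold ind; apply Set.indicator_apply_nonneg; intro; norm_num

open Finset in
lemma seriesTendsTo_of_tail_zero (f : ℕ → ℝ) (N : ℕ) (hf : ∀ i, N ≤ i → f i = 0) :
    SeriesTendsTo f (∑ i ∈ Finset.range N, f i) := by
  unfold SeriesTendsTo
  apply tendsto_const_nhds.congr'
  refine eventually_atTop.mpr ⟨N, fun n hn => ?_⟩
  exact Finset.sum_subset (Finset.range_subset_range.mpr hn)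
    (fun i _ hni => hf i (by simpa using hni))

open Finset in
lemma dutch_of_neg (D : Set (Set Ω)) (Q : Set Ω → ℝ) (A0 : Set Ω) (hA0 : A0 ∈ D)
    (hneg : Q A0 < 0) : IncoherentIn Q (System3 D Q) := by
  classical
  set α : ℕ → ℝ := fun i => if i = 0 then -1 else 0 with hα
  set A : ℕ → Set Ω := fun _ => A0 with hA
  have hbt0 : ∀ ω i, 1 ≤ i → bterm Q α A ω i = 0 := by
    intro ω i hi
    simp only [bterm, hα]
    rw [if_neg (by omega)]
    ring
  have hfee0 : ∀ i, 1 ≤ i → α i * Q (A i) = 0 := by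
    intro i hi; simp only [hα]; rw [if_neg (by omega)]; ring
  refine ⟨α, A, ⟨fun i => hA0, ⟨_, seriesTendsTo_of_tail_zero _ 1 hfee0⟩,
    fun ω => ⟨_, seriesTendsTo_of_tail_zero _ 1 (hbt0 ω)⟩⟩, -Q A0, by linarith, fun ω => ?_⟩
  refine ⟨_, seriesTendsTo_of_tail_zero _ 1 (hbt0 ω), ?_⟩
  rw [Finset.sum_range_one]
  simp only [bterm, hα, hA, if_pos rfl]
  have := ind_nonneg A0 ω
  nlinarith

open Finset in
lemma dutch_of_add (D : Set (Set Ω)) (Q : Set Ω → ℝ) (A0 B0 : Set Ω)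
    (hA0 : A0 ∈ D) (hB0 : B0 ∈ D) (hU : A0 ∪ B0 ∈ D) (hdisj : Disjoint A0 B0)
    (hne : Q (A0 ∪ B0) ≠ Q A0 + Q B0) : IncoherentIn Q (System3 D Q) := by
  classical
  set d : ℝ := Q (A0 ∪ B0) - Q A0 - Q B0 with hd
  have hd0 : d ≠ 0 := by rw [hd]; intro h; apply hne; linarith
  set α : ℕ → ℝ := fun i => if i = 0 then -d else if i = 1 then -d else if i = 2 then d else 0
    with hα
  set A : ℕ → Set Ω := fun i => if i = 0 then A0 else if i = 1 then B0 else A0 ∪ B0 with hA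
  have hAD : ∀ i, A i ∈ D := by
    intro i; simp only [hA]; split_ifs <;> assumption
  have hbt0 : ∀ ω i, 3 ≤ i → bterm Q α A ω i = 0 := by
    intro ω i hi
    simp only [bterm, hα]
    rw [if_neg (by omega), if_neg (by omega), if_neg (by omega)]
    ring
  have hfee0 : ∀ i, 3 ≤ i → α i * Q (A i) = 0 := by
    intro i hi; simp only [hα]
    rw [if_neg (by omega), if_neg (by omega), if_neg (by omega)]; ring
  have hiu : ∀ ω, ind (A0 ∪ B0) ω = ind A0 ω + ind B0 ω := by
    intro ω
    unfold ind
    rw [Set.indicator_union_of_disjoint hdisj]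
  have hsum : ∀ ω, ∑ i ∈ Finset.range 3, bterm Q α A ω i = -(d*d) := by
    intro ω
    rw [Finset.sum_range_succ, Finset.sum_range_succ, Finset.sum_range_one]
    simp only [bterm, hα, hA]
    norm_num
    rw [hiu ω, hd]
    ring
  refine ⟨α, A, ⟨hAD, ⟨_, seriesTendsTo_of_tail_zero _ 3 hfee0⟩,
    fun ω => ⟨_, seriesTendsTo_of_tail_zero _ 3 (hbt0 ω)⟩⟩, d*d, ?_, fun ω => ?_⟩
  · rcases lt_or_gt_of_ne hd0 with h | h <;> nlinarith
  · exact ⟨_, seriesTendsTo_of_tail_zero _ 3 (hbt0 ω), by rw [hsum ω]⟩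

lemma field_inter {D : Set (Set Ω)} (hD : IsSetField D) {A B : Set Ω}
    (hA : A ∈ D) (hB : B ∈ D) : A ∩ B ∈ D := by
  have h := hD.2.1 _ (hD.2.2 _ (hD.2.1 A hA) _ (hD.2.1 B hB))
  rwa [Set.compl_union, compl_compl, compl_compl] at h

lemma field_diff {D : Set (Set Ω)} (hD : IsSetField D) {A B : Set Ω}
    (hA : A ∈ D) (hB : B ∈ D) : A \ B ∈ D := by
  rw [Set.diff_eq]; exact field_inter hD hA (hD.2.1 B hB)

open Finset in
lemma part2_incoherent (D : Set (Set Ω)) (hD : IsSetField D) (Q : Set Ω → ℝ)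
    (E : ℕ → Set Ω) (hED : ∀ i, E i ∈ D)
    (hEinj : ∀ i i', Q (E i) = Q (E i') → i = i') :
    IncoherentIn Q (System3 D Q) := by
  classical
  by_cases hfam : ∃ T : ℕ → Set Ω, (∀ k, T k ∈ D) ∧
      (∀ k l, k ≠ l → ∀ x, x ∈ T k → x ∉ T l) ∧ (∀ k, Q (T k) ≠ 0)
  · obtain ⟨T, h1, h2, h3⟩ := hfam
    exact dutch_of_family D Q T h1 h2 h3
  by_cases hneg : ∃ A0 ∈ D, Q A0 < 0
  · obtain ⟨A0, hA0, h⟩ := hneg; exact dutch_of_neg D Q A0 hA0 h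
  by_cases haddf : ∃ A0 ∈ D, ∃ B0 ∈ D, Disjoint A0 B0 ∧ Q (A0 ∪ B0) ≠ Q A0 + Q B0
  · obtain ⟨A0, hA0, B0, hB0, hdis, hne⟩ := haddf
    exact dutch_of_add D Q A0 B0 hA0 hB0 (hD.2.2 _ hA0 _ hB0) hdis hne
  exfalso
  push_neg at hneg haddf
  have hmono : ∀ A B : Set Ω, A ∈ D → B ∈ D → A ⊆ B → Q A ≤ Q B := by
    intro A B hA hB hAB
    have hdiff : B \ A ∈ D := field_diff hD hB hA
    have h1 : Q (A ∪ (B \ A)) = Q A + Q (B \ A) := haddf A hA _ hdiff disjoint_sdiff_self_right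
    rw [Set.union_diff_cancel hAB] at h1
    have h2 := hneg _ hdiff
    linarith
  have hdiffval : ∀ A B : Set Ω, A ∈ D → B ∈ D → A ⊆ B → Q (B \ A) = Q B - Q A := by
    intro A B hA hB hAB
    have hdiff : B \ A ∈ D := field_diff hD hB hA
    have h1 : Q (A ∪ (B \ A)) = Q A + Q (B \ A) := haddf A hA _ hdiff disjoint_sdiff_self_right
    rw [Set.union_diff_cancel hAB] at h1
    linarith
  have hatom : ∀ A, A ∈ D → Q A ≠ 0 →
      ∃ F, (F ∈ D ∧ F ⊆ A ∧ Q F ≠ 0) ∧ ∀ B, B ∈ D → B ⊆ F → Q B = 0 ∨ Q B = Q F := by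
    intro A hA hQA
    by_contra hno
    push_neg at hno
    have step : ∀ G : {G : Set Ω // G ∈ D ∧ G ⊆ A ∧ Q G ≠ 0},
        ∃ B : Set Ω, (B ∈ D ∧ B ⊆ G.1 ∧ Q B ≠ 0) ∧
          (G.1 \ B ∈ D ∧ G.1 \ B ⊆ A ∧ Q (G.1 \ B) ≠ 0) := by
      intro G
      obtain ⟨hGD, hGA, hGQ⟩ := G.2
      obtain ⟨B, hBD, hBG, hBQ, hBne⟩ := hno G.1 ⟨hGD, hGA, hGQ⟩
      refine ⟨B, ⟨hBD, hBG, hBQ⟩, field_diff hD hGD hBD,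
        Set.diff_subset.trans hGA, ?_⟩
      rw [hdiffval B G.1 hBD hGD hBG]
      intro h; exact hBne (by linarith)
    choose pick hpick using step
    let next : {G : Set Ω // G ∈ D ∧ G ⊆ A ∧ Q G ≠ 0} → {G : Set Ω // G ∈ D ∧ G ⊆ A ∧ Q G ≠ 0} :=
      fun G => ⟨G.1 \ pick G, (hpick G).2⟩
    let R : ℕ → {G : Set Ω // G ∈ D ∧ G ⊆ A ∧ Q G ≠ 0} :=
      fun n => Nat.rec ⟨A, hA, subset_rfl, hQA⟩ (fun _ G => next G) n
    have hRsucc : ∀ n, (R (n+1)).1 = (R n).1 \ pick (R n) := fun n => rfl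
    have hRdec : ∀ n, (R (n+1)).1 ⊆ (R n).1 := by
      intro n; rw [hRsucc]; exact Set.diff_subset
    have hRmono : ∀ k l, k ≤ l → (R l).1 ⊆ (R k).1 := by
      intro k l hkl
      induction l with
      | zero =>
        have hk0 : k = 0 := by omega
        rw [hk0]
      | succ l ih =>
        rcases Nat.lt_or_ge k (l+1) with h | h
        · exact (hRdec l).trans (ih (by omega))
        · have hk : k = l+1 := by omega
          rw [hk]
    apply hfam
    refine ⟨fun k => pick (R k), fun k => (hpick (R k)).1.1, ?_, fun k => (hpick (R k)).1.2.2⟩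
    intro k l hkl x hxk hxl
    rcases Nat.lt_or_ge k l with h | h
    · have h1 : x ∈ (R l).1 := (hpick (R l)).1.2.1 hxl
      have h2 : x ∈ (R (k+1)).1 := hRmono (k+1) l (by omega) h1
      rw [hRsucc] at h2
      exact h2.2 hxk
    · have h1 : x ∈ (R k).1 := (hpick (R k)).1.2.1 hxk
      have h2 : x ∈ (R (l+1)).1 := hRmono (l+1) k (by omega) h1
      rw [hRsucc] at h2
      exact h2.2 hxl
  -- build maximal finite atomic family
  choose atomOf hatomOf using hatom
  let step2 : {G : Set Ω // G ∈ D} → {G : Set Ω // G ∈ D} := fun G =>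
    if h : Q G.1 ≠ 0 then
      ⟨G.1 \ atomOf G.1 G.2 h, field_diff hD G.2 (hatomOf G.1 G.2 h).1.1⟩
    else G
  let R : ℕ → {G : Set Ω // G ∈ D} :=
    fun n => Nat.rec ⟨Set.univ, hD.1⟩ (fun _ G => step2 G) n
  have hRs : ∀ n, R (n+1) = step2 (R n) := fun n => rfl
  have hRdec : ∀ n, (R (n+1)).1 ⊆ (R n).1 := by
    intro n
    rw [hRs]
    show (step2 (R n)).1 ⊆ (R n).1
    unfold step2
    beta_reduce
    split
    · exact Set.diff_subset
    · exact subset_rfl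
  have hRmono : ∀ k l, k ≤ l → (R l).1 ⊆ (R k).1 := by
    intro k l hkl
    induction l with
    | zero =>
      have hk0 : k = 0 := by omega
      rw [hk0]
    | succ l ih =>
      rcases Nat.lt_or_ge k (l+1) with h | h
      · exact (hRdec l).trans (ih (by omega))
      · have hk : k = l+1 := by omega
        rw [hk]
  have hterm : ∃ N, Q (R N).1 = 0 := by
    by_contra hall
    push_neg at hall
    have hs : ∀ n, (R (n+1)).1 = (R n).1 \ atomOf (R n).1 (R n).2 (hall n) := by
      intro n
      rw [hRs]
      show (step2 (R n)).1 = _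
      unfold step2
      beta_reduce
      rw [dif_pos (hall n)]
    apply hfam
    refine ⟨fun n => atomOf (R n).1 (R n).2 (hall n),
      fun n => (hatomOf (R n).1 (R n).2 (hall n)).1.1, ?_,
      fun n => (hatomOf (R n).1 (R n).2 (hall n)).1.2.2⟩
    intro k l hkl x hxk hxl
    rcases Nat.lt_or_ge k l with h | h
    · have h1 : x ∈ (R l).1 := (hatomOf (R l).1 (R l).2 (hall l)).1.2.1 hxl
      have h2 : x ∈ (R (k+1)).1 := hRmono (k+1) l (by omega) h1
      rw [hs] at h2
      exact h2.2 hxk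
    · have h1 : x ∈ (R k).1 := (hatomOf (R k).1 (R k).2 (hall k)).1.2.1 hxk
      have h2 : x ∈ (R (l+1)).1 := hRmono (l+1) k (by omega) h1
      rw [hs] at h2
      exact h2.2 hxl
  let N := Nat.find hterm
  have hNval : Q (R N).1 = 0 := Nat.find_spec hterm
  have hNle : ∀ n, n < N → Q (R n).1 ≠ 0 := fun n hn => Nat.find_min hterm hn
  let Fat : ℕ → Set Ω := fun n =>
    if h : n < N then atomOf (R n).1 (R n).2 (hNle n h) else ∅
  have hFat : ∀ n, n < N →
      (Fat n ∈ D ∧ Fat n ⊆ (R n).1 ∧ Q (Fat n) ≠ 0) ∧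
        (∀ B, B ∈ D → B ⊆ Fat n → Q B = 0 ∨ Q B = Q (Fat n)) := by
    intro n hn
    have h2 : Fat n = atomOf (R n).1 (R n).2 (hNle n hn) := by
      unfold Fat
      beta_reduce
      rw [dif_pos hn]
    rw [h2]
    exact hatomOf (R n).1 (R n).2 (hNle n hn)
  have hsucc : ∀ n, n < N → (R (n+1)).1 = (R n).1 \ Fat n := by
    intro n hn
    have h2 : Fat n = atomOf (R n).1 (R n).2 (hNle n hn) := by
      unfold Fat
      beta_reduce
      rw [dif_pos hn]
    rw [hRs, h2]
    show (step2 (R n)).1 = _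
    unfold step2
    beta_reduce
    rw [dif_pos (hNle n hn)]
  have hdecomp : ∀ B, B ∈ D → Q B = ∑ n ∈ range N, Q (B ∩ Fat n) := by
    intro B hB
    have hBR : ∀ M, B ∩ (R M).1 ∈ D := fun M => field_inter hD hB (R M).2
    have key : ∀ M, M ≤ N → Q B = (∑ n ∈ range M, Q (B ∩ Fat n)) + Q (B ∩ (R M).1) := by
      intro M
      induction M with
      | zero =>
        intro _
        have : (R 0).1 = Set.univ := rfl
        rw [this, Set.inter_univ]
        simp
      | succ M ih =>
        intro hM
        have hMN : M < N := by omega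
        have hFsub : Fat M ⊆ (R M).1 := (hFat M hMN).1.2.1
        have hsplit : B ∩ (R M).1 = (B ∩ (R (M+1)).1) ∪ (B ∩ Fat M) := by
          rw [hsucc M hMN]
          ext x
          constructor
          · rintro ⟨hxB, hxR⟩
            by_cases hxF : x ∈ Fat M
            · exact Or.inr ⟨hxB, hxF⟩
            · exact Or.inl ⟨hxB, hxR, hxF⟩
          · rintro (⟨hxB, hxR, _⟩ | ⟨hxB, hxF⟩)
            · exact ⟨hxB, hxR⟩
            · exact ⟨hxB, hFsub hxF⟩
        have hdisj2 : Disjoint (B ∩ (R (M+1)).1) (B ∩ Fat M) := by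
          rw [hsucc M hMN]
          rw [Set.disjoint_left]
          rintro x ⟨_, _, hxF⟩ ⟨_, hxF'⟩
          exact hxF hxF'
        have hQsplit : Q (B ∩ (R M).1) = Q (B ∩ (R (M+1)).1) + Q (B ∩ Fat M) := by
          rw [hsplit]
          exact haddf _ (hBR (M+1)) _ (field_inter hD hB (hFat M hMN).1.1) hdisj2
        rw [ih (by omega), hQsplit, sum_range_succ]
        ring
    have hfin := key N le_rfl
    have hz : Q (B ∩ (R N).1) = 0 := by
      have h1 : Q (B ∩ (R N).1) ≤ Q (R N).1 :=
        hmono _ _ (hBR N) (R N).2 Set.inter_subset_right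
      have h2 := hneg _ (hBR N)
      rw [hNval] at h1
      linarith
    rw [hfin, hz, add_zero]
  let φ : ℕ → (Fin N → Bool) := fun i k => if Q (E i ∩ Fat k.1) = 0 then false else true
  have hφ : ∀ i i', φ i = φ i' → Q (E i) = Q (E i') := by
    intro i i' h
    rw [hdecomp _ (hED i), hdecomp _ (hED i')]
    apply sum_congr rfl
    intro n hn
    have hnN : n < N := mem_range.mp hn
    have h1 := congrFun h (⟨n, hnN⟩ : Fin N)
    simp only [φ] at h1
    by_cases hz : Q (E i ∩ Fat n) = 0
    · rw [if_pos hz] at h1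
      by_cases hz' : Q (E i' ∩ Fat n) = 0
      · rw [hz, hz']
      · rw [if_neg hz'] at h1; exact absurd h1 Bool.false_ne_true
    · rw [if_neg hz] at h1
      by_cases hz' : Q (E i' ∩ Fat n) = 0
      · rw [if_pos hz'] at h1; exact absurd h1.symm Bool.false_ne_true
      · have hnN' := hnN
        have hprop := (hFat n hnN).2
        have e1 := hprop (E i ∩ Fat n) (field_inter hD (hED i) (hFat n hnN).1.1)
          Set.inter_subset_right
        have e2 := hprop (E i' ∩ Fat n) (field_inter hD (hED i') (hFat n hnN).1.1)
          Set.inter_subset_right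
        rcases e1 with e1 | e1
        · exact absurd e1 hz
        · rcases e2 with e2 | e2
          · exact absurd e2 hz'
          · rw [e1, e2]
  obtain ⟨i, i', hne, heq⟩ := Finite.exists_ne_map_eq_of_infinite φ
  exact hne (hEinj i i' (hφ i i' heq))

lemma ind_AB (k : ℕ) (ω : ℕ → Bool) : ind (AB k) ω = if ω k then 1 else 0 := by
  classical
  unfold ind
  rw [Set.indicator_apply]
  by_cases h : ω k
  · rw [if_pos h, if_pos (show ω ∈ AB k from h)]
  · rw [if_neg h, if_neg (show ω ∉ AB k from h)]

open Finset in
lemma part1_coherent (P : Set (ℕ → Bool) → ℝ)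
    (hP : ∀ i, 1 ≤ i → P (AB i) = 1/2 - (1/4 : ℝ) ^ i) :
    CoherentIn P (System3 {S | ∃ i, 1 ≤ i ∧ S = AB i} P) := by
  classical
  rintro ⟨α, A, hS3, ε, hε, hω⟩
  obtain ⟨hAC, ⟨s, hs⟩, _⟩ := hS3
  choose j hj1 hj2 using hAC
  set p : ℕ → ℝ := fun m => 1/2 - (1/4:ℝ)^m with hp
  have hPA : ∀ i, P (A i) = p (j i) := fun i => by rw [hj2 i, hP _ (hj1 i)]
  have hp0 : ∀ m, 1 ≤ m → 0 ≤ p m := by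
    intro m hm
    rw [hp]
    simp only
    have h1 : (1/4:ℝ)^m ≤ (1/4:ℝ)^1 := by
      apply pow_le_pow_of_le_one (by norm_num) (by norm_num) hm
    norm_num at h1 ⊢
    linarith
  have hp1 : ∀ m, p m < 1 := by
    intro m
    rw [hp]
    simp only
    have h1 : (0:ℝ) < (1/4:ℝ)^m := by positivity
    linarith
  set BP : ℕ → (ℕ → Bool) → ℝ :=
    fun n ω => ∑ i ∈ range n, α i * (if ω (j i) then 1 else 0) with hBP
  have hbt : ∀ (ω : ℕ → Bool) n, ∑ i ∈ range n, bterm P α A ω i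
      = BP n ω - ∑ i ∈ range n, α i * P (A i) := by
    intro ω n
    rw [hBP, ← sum_sub_distrib]
    apply sum_congr rfl
    intro i _
    rw [bterm, hj2 i, ind_AB, ← hj2 i]
    ring
  have hV : ∀ ω : ℕ → Bool, ∃ V, Tendsto (fun n => BP n ω) atTop (nhds V) ∧ V ≤ s - ε := by
    intro ω
    obtain ⟨L, hL, hLle⟩ := hω ω
    refine ⟨L + s, ?_, by linarith⟩
    have h2 := hL.add hs
    apply h2.congr
    intro n
    rw [hbt ω n]
    ring
  have hbound : ∀ ω : ℕ → Bool, ∃ M : ℕ, ∀ n, |BP n ω| ≤ M := by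
    intro ω
    obtain ⟨V, hV', _⟩ := hV ω
    obtain ⟨M, hM⟩ := (hV'.abs).bddAbove_range
    refine ⟨⌈M⌉₊, fun n => ?_⟩
    have h1 : |BP n ω| ≤ M := hM ⟨n, rfl⟩
    exact h1.trans ((Nat.le_ceil M).trans (by norm_num))
  set F : ℕ → Set (ℕ → Bool) := fun M => {ω | ∀ n, |BP n ω| ≤ M} with hF
  have hBPcont : ∀ n, Continuous (fun ω : ℕ → Bool => BP n ω) := by
    intro n
    apply continuous_finset_sum
    intro i _
    exact ((continuous_of_discreteTopology
      (f := fun b : Bool => α i * (if b then (1:ℝ) else 0))).comp (continuous_apply (j i)))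
  have hFclosed : ∀ M, IsClosed (F M) := by
    intro M
    have he : F M = ⋂ n, {ω | |BP n ω| ≤ M} := by
      ext ω; simp [hF, Set.mem_iInter]
    rw [he]
    apply isClosed_iInter
    intro n
    exact isClosed_le (hBPcont n).abs continuous_const
  have hFunion : ⋃ M, F M = Set.univ := by
    apply Set.eq_univ_of_forall
    intro ω
    obtain ⟨M, hM⟩ := hbound ω
    exact Set.mem_iUnion.mpr ⟨M, hM⟩
  obtain ⟨M₀, hM₀⟩ := nonempty_interior_of_iUnion_of_closed hFclosed hFunion
  obtain ⟨ω₀, hω₀⟩ := hM₀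
  obtain ⟨I, u, hu, hsub⟩ := (isOpen_pi_iff.mp isOpen_interior) ω₀ hω₀
  have hKm : ∀ m : ℕ, ∃ Km : ℝ, ∀ n,
      |∑ i ∈ (range n).filter (fun i => j i = m), α i| ≤ Km := by
    intro m
    obtain ⟨Mb, hMb⟩ := hbound (fun m' => if m' = m then true else false)
    refine ⟨Mb, fun n => ?_⟩
    have he : ∑ i ∈ (range n).filter (fun i => j i = m), α i
        = BP n (fun m' => if m' = m then true else false) := by
      rw [hBP, sum_filter]
      apply sum_congr rfl
      intro i _
      by_cases h : j i = m <;> simp [h]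
    rw [he]
    exact hMb n
  choose Km hKm' using hKm
  set K : ℝ := M₀ + ∑ m ∈ I, Km m with hK
  have hKbound : ∀ (ω : ℕ → Bool) (n : ℕ), |BP n ω| ≤ K := by
    intro ω n
    set ω' : ℕ → Bool := fun m => if m ∈ I then ω₀ m else ω m with hω'
    have hω'mem : ω' ∈ F M₀ := by
      apply interior_subset
      apply hsub
      intro m hm
      have hm' : m ∈ I := hm
      simp only [hω']
      rw [if_pos hm']
      exact (hu m hm').2
    set d : ℕ → ℝ := fun m => (if ω m then (1:ℝ) else 0) - (if ω' m then 1 else 0) with hd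
    have hdiffid : BP n ω - BP n ω'
        = ∑ m ∈ I, (d m * ∑ i ∈ (range n).filter (fun i => j i = m), α i) := by
      have hrhs : ∀ m, d m * ∑ i ∈ (range n).filter (fun i => j i = m), α i
          = ∑ i ∈ range n, (if j i = m then d m * α i else 0) := by
        intro m
        rw [mul_sum, sum_filter]
      have hR : ∑ m ∈ I, (d m * ∑ i ∈ (range n).filter (fun i => j i = m), α i)
          = ∑ i ∈ range n, ∑ m ∈ I, (if j i = m then d m * α i else 0) := by
        rw [sum_congr rfl (fun m _ => hrhs m), sum_comm]
      rw [hBP, ← sum_sub_distrib, hR]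
      apply sum_congr rfl
      intro i _
      rw [sum_ite_eq I (j i) (fun m => d m * α i)]
      by_cases h : j i ∈ I
      · rw [if_pos h]
        rw [hd]
        ring
      · rw [if_neg h]
        have : ω' (j i) = ω (j i) := by
          simp only [hω']
          rw [if_neg h]
        rw [this]
        ring
    have habs : |BP n ω| ≤ |BP n ω'| + ∑ m ∈ I, |d m * ∑ i ∈ (range n).filter (fun i => j i = m), α i| := by
      have h1 : BP n ω = BP n ω' + ∑ m ∈ I, (d m * ∑ i ∈ (range n).filter (fun i => j i = m), α i) := by
        rw [← hdiffid]; ring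
      rw [h1]
      exact (abs_add_le _ _).trans (by gcongr; exact abs_sum_le_sum_abs _ _)
    have hterm : ∀ m ∈ I, |d m * ∑ i ∈ (range n).filter (fun i => j i = m), α i| ≤ Km m := by
      intro m _
      rw [abs_mul]
      have hd1 : |d m| ≤ 1 := by
        rw [hd]
        simp only
        split_ifs <;> norm_num
      calc |d m| * |∑ i ∈ (range n).filter (fun i => j i = m), α i|
          ≤ 1 * |∑ i ∈ (range n).filter (fun i => j i = m), α i| := by
            apply mul_le_mul_of_nonneg_right hd1 (abs_nonneg _)
        _ = |∑ i ∈ (range n).filter (fun i => j i = m), α i| := one_mul _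
        _ ≤ Km m := hKm' m n
    calc |BP n ω| ≤ |BP n ω'| + ∑ m ∈ I, |d m * ∑ i ∈ (range n).filter (fun i => j i = m), α i| := habs
      _ ≤ M₀ + ∑ m ∈ I, Km m := by
          apply add_le_add (hω'mem n) (sum_le_sum hterm)
      _ = K := hK.symm
  have hKnonneg : 0 ≤ K := le_trans (abs_nonneg _) (hKbound (fun _ => false) 0)
  have hsge : ε ≤ s := by
    obtain ⟨V, hVt, hVle⟩ := hV (fun _ => false)
    have hz : ∀ n, BP n (fun _ => false) = 0 := by
      intro n; rw [hBP]; simp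
    have hV0 : V = 0 := by
      have h2 : Tendsto (fun n => BP n (fun _ => false)) atTop (nhds 0) := by
        simp only [hz]
        exact tendsto_const_nhds
      exact tendsto_nhds_unique hVt h2
    rw [hV0] at hVle
    linarith
  have hmain : ∀ Nn : ℕ, 1 ≤ Nn → s ≤ s - ε + K / Nn := by
    intro Nn hNn
    have hNpos : (0:ℝ) < (Nn:ℝ) := by exact_mod_cast hNn
    set ωT : ℕ → (ℕ → Bool) := fun t m => if (t:ℝ)/Nn ≤ p m then true else false with hωT
    have hVt : ∀ t, ∃ V, Tendsto (fun n => BP n (ωT t)) atTop (nhds V) ∧ V ≤ s - ε :=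
      fun t => hV (ωT t)
    choose Vt hVt1 hVt2 using hVt
    set χ : ℕ → ℕ → ℝ := fun t m => if (t:ℝ)/Nn ≤ p m then 1 else 0 with hχ
    have hlayer : ∀ m, 1 ≤ m →
        ∑ t ∈ Icc (1:ℕ) Nn, χ t m = (⌊(Nn:ℝ) * p m⌋₊ : ℝ) := by
      intro m hm
      simp only [hχ]
      have hpm0 : (0:ℝ) ≤ (Nn:ℝ) * p m := mul_nonneg hNpos.le (hp0 m hm)
      have hfe : (Icc (1:ℕ) Nn).filter (fun t : ℕ => (t:ℝ)/Nn ≤ p m) = Icc 1 ⌊(Nn:ℝ) * p m⌋₊ := by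
        ext t
        simp only [mem_filter, mem_Icc]
        constructor
        · rintro ⟨⟨h1, h2⟩, h3⟩
          refine ⟨h1, ?_⟩
          rw [Nat.le_floor_iff hpm0]
          rw [div_le_iff₀ hNpos] at h3
          linarith
        · rintro ⟨h1, h2⟩
          have hlt : (Nn:ℝ) * p m < (Nn:ℝ) := by
            have := mul_lt_mul_of_pos_left (hp1 m) hNpos
            rwa [mul_one] at this
          have hflo : ⌊(Nn:ℝ) * p m⌋₊ ≤ Nn := ((Nat.floor_lt hpm0).mpr hlt).le
          refine ⟨⟨h1, le_trans h2 hflo⟩, ?_⟩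
          rw [div_le_iff₀ hNpos]
          have h3 : (t:ℝ) ≤ (⌊(Nn:ℝ) * p m⌋₊ : ℝ) := by exact_mod_cast h2
          have h4 : (⌊(Nn:ℝ) * p m⌋₊ : ℝ) ≤ (Nn:ℝ) * p m := Nat.floor_le hpm0
          linarith
      rw [sum_ite, sum_const, sum_const, hfe]
      simp [Nat.card_Icc]
    set r : ℕ → ℝ := fun m => p m - (⌊(Nn:ℝ) * p m⌋₊ : ℝ)/Nn with hr
    have hr0 : ∀ m, 1 ≤ m → 0 ≤ r m ∧ r m ≤ 1/Nn := by
      intro m hm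
      have hpm0 : (0:ℝ) ≤ (Nn:ℝ) * p m := mul_nonneg hNpos.le (hp0 m hm)
      have h4 : (⌊(Nn:ℝ) * p m⌋₊ : ℝ) ≤ (Nn:ℝ) * p m := Nat.floor_le hpm0
      have h5 : (Nn:ℝ) * p m < (⌊(Nn:ℝ) * p m⌋₊ : ℝ) + 1 := Nat.lt_floor_add_one _
      constructor
      · rw [hr]
        simp only
        rw [sub_nonneg, div_le_iff₀ hNpos]
        linarith
      · rw [hr]
        simp only
        have e : 1/(Nn:ℝ) + (⌊(Nn:ℝ) * p m⌋₊ : ℝ)/Nn = ((⌊(Nn:ℝ) * p m⌋₊ : ℝ)+1)/Nn := by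
          field_simp
          ring
        have h6 : p m ≤ ((⌊(Nn:ℝ) * p m⌋₊ : ℝ)+1)/Nn := by
          rw [le_div_iff₀ hNpos]
          nlinarith
        linarith [e, h6]
    have hineq : ∀ n, ∑ i ∈ range n, α i * P (A i)
        ≤ (1/(Nn:ℝ)) * ∑ t ∈ Icc (1:ℕ) Nn, BP n (ωT t) + K / Nn := by
      intro n
      set c : ℕ → ℝ := fun m => ∑ i ∈ (range n).filter (fun i => j i = m), α i with hc
      set Jset := (range n).image j with hJ
      have hωTχ : ∀ t m, (if ωT t m then (1:ℝ) else 0) = χ t m := by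
        intro t m
        rw [hωT, hχ]
        by_cases h : (t:ℝ)/Nn ≤ p m <;> simp [h]
      have hsplit : ∑ i ∈ range n, α i * P (A i)
          = (1/(Nn:ℝ)) * ∑ t ∈ Icc (1:ℕ) Nn, BP n (ωT t) + ∑ i ∈ range n, α i * r (j i) := by
        have h1 : ∀ i, α i * P (A i) = α i * ((⌊(Nn:ℝ) * p (j i)⌋₊ : ℝ)/Nn) + α i * r (j i) := by
          intro i
          rw [hPA i, hr]
          simp only
          ring
        rw [sum_congr rfl (fun i _ => h1 i), sum_add_distrib]
        congr 1
        have h2 : ∀ i ∈ range n, α i * ((⌊(Nn:ℝ) * p (j i)⌋₊ : ℝ)/Nn)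
            = (1/(Nn:ℝ)) * ∑ t ∈ Icc (1:ℕ) Nn, α i * (if ωT t (j i) then (1:ℝ) else 0) := by
          intro i _
          have h3 : ∑ t ∈ Icc (1:ℕ) Nn, α i * (if ωT t (j i) then (1:ℝ) else 0)
              = α i * (⌊(Nn:ℝ) * p (j i)⌋₊ : ℝ) := by
            rw [← mul_sum]
            congr 1
            rw [← hlayer (j i) (hj1 i)]
            apply sum_congr rfl
            intro t _
            exact hωTχ t (j i)
          rw [h3]
          ring
        rw [sum_congr rfl h2, ← mul_sum]
        congr 1
        rw [sum_comm]
      have hrem : ∑ i ∈ range n, α i * r (j i) ≤ K / Nn := by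
        have hfib : ∑ i ∈ range n, α i * r (j i) = ∑ m ∈ Jset, c m * r m := by
          rw [← sum_fiberwise_of_maps_to (fun i hi => mem_image_of_mem j hi)
            (fun i => α i * r (j i))]
          apply sum_congr rfl
          intro m _
          rw [hc]
          simp only
          rw [sum_mul]
          apply sum_congr rfl
          intro i hi
          rw [(mem_filter.mp hi).2]
        set ωp : ℕ → Bool := fun m => if 0 < c m then true else false with hωp
        have hBPp : BP n ωp = ∑ m ∈ Jset, (if 0 < c m then c m else 0) := by
          rw [hBP]
          beta_reduce
          rw [← sum_fiberwise_of_maps_to (fun i hi => mem_image_of_mem j hi)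
            (fun i => α i * (if ωp (j i) then (1:ℝ) else 0))]
          apply sum_congr rfl
          intro m _
          by_cases h : 0 < c m
          · rw [if_pos h]
            have h5 : ∀ i ∈ (range n).filter (fun i => j i = m),
                α i * (if ωp (j i) then (1:ℝ) else 0) = α i := by
              intro i hi
              rw [(mem_filter.mp hi).2, hωp]
              simp [h]
            rw [sum_congr rfl h5]
          · rw [if_neg h]
            have h5 : ∀ i ∈ (range n).filter (fun i => j i = m),
                α i * (if ωp (j i) then (1:ℝ) else 0) = 0 := by
              intro i hi
              rw [(mem_filter.mp hi).2, hωp]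
              simp [h]
            rw [sum_congr rfl h5, sum_const, smul_zero]
        have hle1 : ∑ m ∈ Jset, c m * r m ≤ ∑ m ∈ Jset, (if 0 < c m then c m else 0) * (1/Nn) := by
          apply sum_le_sum
          intro m hm
          have hm1 : 1 ≤ m := by
            obtain ⟨i, hi, hji⟩ := mem_image.mp hm
            rw [← hji]
            exact hj1 i
          obtain ⟨hrm0, hrm1⟩ := hr0 m hm1
          by_cases h : 0 < c m
          · rw [if_pos h]
            exact mul_le_mul_of_nonneg_left hrm1 h.le
          · rw [if_neg h, zero_mul]
            push_neg at h
            exact mul_nonpos_of_nonpos_of_nonneg h hrm0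
        have hle2 : ∑ m ∈ Jset, (if 0 < c m then c m else 0) * (1/(Nn:ℝ)) ≤ K * (1/Nn) := by
          rw [← sum_mul]
          apply mul_le_mul_of_nonneg_right _ (by positivity)
          rw [← hBPp]
          exact le_trans (le_abs_self _) (hKbound ωp n)
        calc ∑ i ∈ range n, α i * r (j i) = ∑ m ∈ Jset, c m * r m := hfib
          _ ≤ ∑ m ∈ Jset, (if 0 < c m then c m else 0) * (1/Nn) := hle1
          _ ≤ K * (1/Nn) := hle2
          _ = K / Nn := by ring
      rw [hsplit]
      linarith
    have hlim1 : Tendsto (fun n => (1/(Nn:ℝ)) * ∑ t ∈ Icc (1:ℕ) Nn, BP n (ωT t) + K / Nn) atTop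
        (nhds ((1/(Nn:ℝ)) * ∑ t ∈ Icc (1:ℕ) Nn, Vt t + K / Nn)) := by
      apply Tendsto.add _ tendsto_const_nhds
      apply Filter.Tendsto.const_mul
      exact tendsto_finset_sum _ (fun t _ => hVt1 t)
    have hle := le_of_tendsto_of_tendsto' hs hlim1 hineq
    have hsum_le : ∑ t ∈ Icc (1:ℕ) Nn, Vt t ≤ (Nn:ℝ) * (s - ε) := by
      calc ∑ t ∈ Icc (1:ℕ) Nn, Vt t ≤ ∑ t ∈ Icc (1:ℕ) Nn, (s - ε) := sum_le_sum (fun t _ => hVt2 t)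
        _ = (Nn:ℝ) * (s-ε) := by
            rw [sum_const, Nat.card_Icc, nsmul_eq_mul]
            norm_num
    have hfin : (1/(Nn:ℝ)) * ∑ t ∈ Icc (1:ℕ) Nn, Vt t ≤ s - ε := by
      have h6 := mul_le_mul_of_nonneg_left hsum_le (le_of_lt (by positivity : (0:ℝ) < 1/(Nn:ℝ)))
      calc (1/(Nn:ℝ)) * ∑ t ∈ Icc (1:ℕ) Nn, Vt t ≤ (1/(Nn:ℝ)) * ((Nn:ℝ)*(s-ε)) := h6
        _ = s - ε := by field_simp
    linarith
  obtain ⟨Nn, hNgt⟩ := exists_nat_gt (K / ε)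
  have hNn1 : 1 ≤ max Nn 1 := le_max_right _ _
  have h7 := hmain (max Nn 1) hNn1
  have h8 : K / ((max Nn 1 : ℕ):ℝ) < ε := by
    have hmaxpos : (0:ℝ) < ((max Nn 1 : ℕ):ℝ) := by exact_mod_cast hNn1
    rw [div_lt_iff₀ hmaxpos]
    have h9 : K / ε < ((max Nn 1:ℕ):ℝ) := lt_of_lt_of_le hNgt (by exact_mod_cast le_max_left Nn 1)
    rw [div_lt_iff₀ hε] at h9
    calc K < ((max Nn 1:ℕ):ℝ) * ε := h9
      _ = ε * ((max Nn 1:ℕ):ℝ) := mul_comm _ _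
  linarith

theorem stmt12 (P : Set (ℕ → Bool) → ℝ)
    (hP : ∀ i, 1 ≤ i → P (AB i) = 1/2 - (1/4 : ℝ) ^ i) :
    CoherentIn P (System3 {S | ∃ i, 1 ≤ i ∧ S = AB i} P) ∧
    ∀ D : Set (Set (ℕ → Bool)), IsSetField D → (∀ i, 1 ≤ i → AB i ∈ D) →
      ∀ Q : Set (ℕ → Bool) → ℝ, (∀ i, 1 ≤ i → Q (AB i) = P (AB i)) →
        ¬ CoherentIn Q (System3 D Q) := by
  constructor
  · exact part1_coherent P hP
  · intro D hD hABD Q hQ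
    intro hcoh
    apply hcoh
    apply part2_incoherent D hD Q (fun i => AB (i+1)) (fun i => hABD (i+1) (by omega))
    intro i i' h
    rw [hQ (i+1) (by omega), hQ (i'+1) (by omega), hP (i+1) (by omega),
        hP (i'+1) (by omega)] at h
    have h2 : (1/4:ℝ)^(i+1) = (1/4:ℝ)^(i'+1) := by linarith
    have hsm : StrictAnti (fun n : ℕ => (1/4:ℝ)^n) := pow_right_strictAnti₀ (by norm_num) (by norm_num)
    have h3 := hsm.injective h2
    omega
end

section
/- Let 𝒞 be a field on Ω and P a countably additive probability with extension P* to σ(𝒞). For every betting portfolio (α_i, A_i)_{i≥1} with A_i ∈ 𝒞 such that Σ_{i=1}^∞ |α_i(I_{A_i}(ω) − P(A_i))| < ∞ for every ω ∈ Ω (betting system 2A), one has Σ_{i=1}^∞ |α_i| P(A_i)(1 − P(A_i)) < ∞ and E_{P*}[Σ α_i(I_{A_i} − P(A_i))] = 0. Hence P is coherent in betting system 2A. -/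
open Filter MeasureTheory ENNReal

variable {Ω : Type*}

theorem stmt13 {Ω : Type*} [m : MeasurableSpace Ω] (C : Set (Set Ω)) (P : Set Ω → ℝ)
    (hC : IsSetField C) (hP : IsCAProb C P)
    (hm : m = MeasurableSpace.generateFrom C)
    (μ : Measure Ω) [IsProbabilityMeasure μ]
    (hμ : ∀ A ∈ C, μ A = ENNReal.ofReal (P A)) :
    (∀ α A, System2A C P α A →
      Summable (fun i => |α i| * P (A i) * (1 - P (A i))) ∧
      ∀ b : Ω → ℝ, (∀ ω, SeriesTendsTo (bterm P α A ω) (b ω)) →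
        Integrable b μ ∧ ∫ ω, b ω ∂μ = 0) ∧
    CoherentIn P (System2A C P) := by

  classical
  -- basic facts about P
  obtain ⟨hP1, hP0, hPadd, _⟩ := hP
  have hPle1 : ∀ B ∈ C, P B ≤ 1 := by
    intro B hB
    have hBc : Bᶜ ∈ C := hC.2.1 B hB
    have hdisj : Disjoint B Bᶜ := disjoint_compl_right
    have := hPadd B hB Bᶜ hBc hdisj
    rw [Set.union_compl_self, hP1] at this
    have := hP0 Bᶜ hBc
    linarith
  have hmeas : ∀ B ∈ C, MeasurableSet B := by
    intro B hB
    rw [hm]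
    exact MeasurableSpace.measurableSet_generateFrom hB
  have hμto : ∀ B ∈ C, (μ B).toReal = P B := by
    intro B hB
    rw [hμ B hB, ENNReal.toReal_ofReal (hP0 B hB)]
  -- main part
  have main : ∀ α A, System2A C P α A →
      Summable (fun i => |α i| * P (A i) * (1 - P (A i))) ∧
      ∀ b : Ω → ℝ, (∀ ω, SeriesTendsTo (bterm P α A ω) (b ω)) →
        Integrable b μ ∧ ∫ ω, b ω ∂μ = 0 := by
    intro α A h2A
    obtain ⟨hA, hsum⟩ := h2A
    have hP0i : ∀ i, 0 ≤ P (A i) := fun i => hP0 (A i) (hA i)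
    have hP1i : ∀ i, P (A i) ≤ 1 := fun i => hPle1 (A i) (hA i)
    have hmi : ∀ i, MeasurableSet (A i) := fun i => hmeas (A i) (hA i)
    -- Ω is nonempty
    have hne : Nonempty Ω := by
      by_contra h
      rw [not_nonempty_iff] at h
      have : μ Set.univ = 0 := by
        rw [Set.univ_eq_empty_iff.mpr h, measure_empty]
      rw [measure_univ] at this
      exact one_ne_zero this
    obtain ⟨ω₀⟩ := hne
    -- pointwise inequality: P(1-P) ≤ |ind - P|
    have hkey : ∀ i ω, P (A i) * (1 - P (A i)) ≤ |ind (A i) ω - P (A i)| := by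
      intro i ω
      by_cases h : ω ∈ A i
      · have : ind (A i) ω = 1 := by simp [ind, Set.indicator_of_mem h]
        rw [this, abs_of_nonneg (by linarith [hP1i i])]
        nlinarith [hP0i i, hP1i i]
      · have : ind (A i) ω = 0 := by simp [ind, Set.indicator_of_notMem h]
        rw [this, abs_of_nonpos (by linarith [hP0i i]), neg_sub, sub_zero]
        nlinarith [hP0i i, hP1i i]
    -- summability of |α i| * P (A i) * (1 - P (A i))
    have hsum1 : Summable (fun i => |α i| * P (A i) * (1 - P (A i))) := by
      apply Summable.of_nonneg_of_le _ _ (hsum ω₀)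
      · intro i
        have h0 := hP0i i; have h1 := hP1i i
        exact mul_nonneg (mul_nonneg (abs_nonneg _) h0) (by linarith)
      · intro i
        rw [mul_assoc]
        unfold bterm
        rw [abs_mul]
        exact mul_le_mul_of_nonneg_left (hkey i ω₀) (abs_nonneg _)
    refine ⟨hsum1, ?_⟩
    -- the functions g i
    set g : ℕ → Ω → ℝ := fun i ω => α i * (ind (A i) ω - P (A i)) with hg
    have hgmeas : ∀ i, Measurable (g i) := by
      intro i
      apply Measurable.const_mul
      apply Measurable.sub _ measurable_const
      exact (measurable_const.indicator (hmi i))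
    have hindInt : ∀ i, Integrable (fun ω => ind (A i) ω) μ := by
      intro i
      exact (integrable_const (1:ℝ)).indicator (hmi i)
    have hgint : ∀ i, Integrable (g i) μ := by
      intro i
      exact (((hindInt i).sub (integrable_const _)).const_mul (α i))
    have hindval : ∀ i, ∫ ω, ind (A i) ω ∂μ = P (A i) := by
      intro i
      have : ∫ ω, ind (A i) ω ∂μ = (μ (A i)).toReal • (1:ℝ) := by
        unfold ind
        exact integral_indicator_const (1:ℝ) (hmi i)
      rw [this, smul_eq_mul, mul_one, hμto (A i) (hA i)]
    have hgzero : ∀ i, ∫ ω, g i ω ∂μ = 0 := by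
      intro i
      have : ∫ ω, g i ω ∂μ = α i * ((∫ ω, ind (A i) ω ∂μ) - P (A i) * (μ Set.univ).toReal) := by
        rw [integral_const_mul]
        congr 1
        rw [integral_sub (hindInt i) (integrable_const _), integral_const, smul_eq_mul, mul_comm]
        rfl
      rw [this, hindval, measure_univ, ENNReal.toReal_one, mul_one, sub_self, mul_zero]
    -- value of ∫ |g i|
    have habs_eq : ∀ i, (fun ω => |g i ω|) =
        fun ω => |α i| * ((1 - 2 * P (A i)) * ind (A i) ω + P (A i)) := by
      intro i
      funext ω
      rw [hg]
      simp only
      rw [abs_mul]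
      congr 1
      by_cases h : ω ∈ (A i)
      · have h1 : ind (A i) ω = 1 := by simp [ind, Set.indicator_of_mem h]
        rw [h1, abs_of_nonneg (by linarith [hP1i i])]
        ring
      · have h1 : ind (A i) ω = 0 := by simp [ind, Set.indicator_of_notMem h]
        rw [h1, abs_of_nonpos (by linarith [hP0i i])]
        ring
    have hintabs : ∀ i, ∫ ω, ‖g i ω‖ ∂μ = 2 * (|α i| * P (A i) * (1 - P (A i))) := by
      intro i
      simp only [Real.norm_eq_abs]
      rw [show (fun ω => |g i ω|) = _ from habs_eq i]
      rw [integral_const_mul]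
      rw [integral_add (((hindInt i)).const_mul _) (integrable_const _)]
      rw [integral_const_mul, hindval, integral_const, probReal_univ, one_smul]
      ring
    have hsumInt : Summable (fun i => ∫ ω, ‖g i ω‖ ∂μ) := by
      simp only [hintabs]
      exact hsum1.mul_left 2
    -- each ω: summable, identify the limit
    intro b hb
    have hbsum : ∀ ω, Summable (fun i => g i ω) := by
      intro ω
      exact (hsum ω).of_abs
    have hbeq : ∀ ω, b ω = ∑' i, g i ω := by
      intro ω
      have h1 : SeriesTendsTo (fun i => g i ω) (∑' i, g i ω) := (hbsum ω).hasSum.tendsto_sum_nat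
      exact tendsto_nhds_unique (hb ω) h1
    have hbmeas : Measurable b := by
      apply measurable_of_tendsto_metrizable'
        (f := fun n ω => ∑ i ∈ Finset.range n, g i ω) atTop
      · intro n
        exact Finset.measurable_sum _ (fun i _ => hgmeas i)
      · rw [tendsto_pi_nhds]
        exact hb
    -- integrability
    have hbint : Integrable b μ := by
      refine ⟨hbmeas.aestronglyMeasurable, ?_⟩
      have hptle : ∀ ω, (‖b ω‖₊ : ℝ≥0∞) ≤ ∑' i, (‖g i ω‖₊ : ℝ≥0∞) := by
        intro ω
        have hsn : Summable (fun i => ‖g i ω‖) := by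
          exact hsum ω
        have h1 : |b ω| ≤ ∑' i, |g i ω| := by
          rw [hbeq ω]
          simpa [Real.norm_eq_abs] using norm_tsum_le_tsum_norm hsn
        have e1 : (‖b ω‖₊ : ℝ≥0∞) = ENNReal.ofReal |b ω| := by
          rw [← Real.norm_eq_abs]; exact (ofReal_norm (b ω)).symm
        have hsa : Summable (fun i => |g i ω|) := hsum ω
        have e2 : ENNReal.ofReal (∑' i, |g i ω|) = ∑' i, (‖g i ω‖₊ : ℝ≥0∞) := by
          rw [ENNReal.ofReal_tsum_of_nonneg (fun i => abs_nonneg _) hsa]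
          congr 1; funext i; rw [← Real.norm_eq_abs]; exact ofReal_norm (g i ω)
        rw [e1, ← e2]
        exact ENNReal.ofReal_le_ofReal h1
      show (∫⁻ ω, ‖b ω‖₊ ∂μ) < ⊤
      calc ∫⁻ ω, ‖b ω‖₊ ∂μ ≤ ∫⁻ ω, ∑' i, (‖g i ω‖₊ : ℝ≥0∞) ∂μ := lintegral_mono hptle
        _ = ∑' i, ∫⁻ ω, (‖g i ω‖₊ : ℝ≥0∞) ∂μ :=
            lintegral_tsum (fun i => (hgmeas i).nnnorm.coe_nnreal_ennreal.aemeasurable)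
        _ = ∑' i, ENNReal.ofReal (∫ ω, ‖g i ω‖ ∂μ) := by
            congr 1; funext i
            exact (ofReal_integral_norm_eq_lintegral_enorm (hgint i)).symm
        _ = ENNReal.ofReal (∑' i, ∫ ω, ‖g i ω‖ ∂μ) :=
            (ENNReal.ofReal_tsum_of_nonneg
              (fun i => integral_nonneg (fun ω => norm_nonneg _)) hsumInt).symm
        _ < ⊤ := ENNReal.ofReal_lt_top
    refine ⟨hbint, ?_⟩
    have : ∫ ω, b ω ∂μ = ∑' i, ∫ ω, g i ω ∂μ := by
      rw [show b = fun ω => ∑' i, g i ω from funext hbeq]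
      exact (integral_tsum_of_summable_integral_norm hgint hsumInt).symm
    rw [this]
    simp [hgzero]
  refine ⟨main, ?_⟩
  -- coherence
  rintro ⟨α, A, h2A, ε, hε, hL⟩
  choose b hb1 hb2 using hL
  obtain ⟨hint, hzero⟩ := (main α A h2A).2 b hb1
  have hle : ∫ ω, b ω ∂μ ≤ ∫ _, (-ε) ∂μ :=
    integral_mono hint (integrable_const _) hb2
  rw [hzero, integral_const, probReal_univ, one_smul] at hle
  linarith
end
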